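/- Let p ≥ 3 be prime. Any subset A ⊆ 𝔽_p^n with no non-degenerate three-term arithmetic progression (no solution of x_1 − 2x_2 + x_3 = 0 with x_1, x_2, x_3 distinct) satisfies #A ≤ (Λ_{1,1/3,p-1})^n, where Λ_{1,1/3,p-1} = min_{u∈(0,1]} u^{-(p-1)/3}(1 + u + ... + u^{p-1}). Moreover Λ_{1,1/3,p-1} < p. -/

import Mathlib

open Finset

/-- `G_{m,α,h}(u) = u^{-αh} (1 + u + u² + ⋯ + u^{mh})`. -/
noncomputable def Gfun (m : ℕ) (α : ℝ) (h : ℕ) (u : ℝ) : ℝ :=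
  u ^ (-(α * h)) * ∑ j ∈ Finset.range (m * h + 1), u ^ j

/-- `Λ_{m,α,h}`: the minimum (infimum) of `G_{m,α,h}` over `(0,1]`. -/
noncomputable def Lam (m : ℕ) (α : ℝ) (h : ℕ) : ℝ :=
  sInf (Gfun m α h '' Set.Ioc 0 1)

namespace EGaux

def Ed (p m d : ℕ) : Finset (Fin m → ℕ) :=
  (Fintype.piFinset fun _ : Fin m => Finset.range p).filter fun e => ∑ i, e i ≤ d

def md (p m d : ℕ) : ℕ := (Ed p m d).card

def monoF (p : ℕ) {m : ℕ} (e : Fin m → ℕ) : (Fin m → ZMod p) → ZMod p :=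
  fun x => ∏ i, x i ^ e i

lemma sum_pow_expand {m : ℕ} (p : ℕ) (u : ℝ) :
    ∑ e ∈ Fintype.piFinset (fun _ : Fin m => Finset.range p), u ^ (∑ i, e i)
      = (∑ j ∈ Finset.range p, u ^ j) ^ m := by
  calc ∑ e ∈ Fintype.piFinset (fun _ : Fin m => Finset.range p), u ^ (∑ i, e i)
      = ∑ e ∈ Fintype.piFinset (fun _ : Fin m => Finset.range p), ∏ i, u ^ (e i) :=
        Finset.sum_congr rfl fun e _ => (Finset.prod_pow_eq_pow_sum _ _ _).symm
    _ = ∏ _i : Fin m, ∑ j ∈ Finset.range p, u ^ j := (Finset.prod_univ_sum _ _).symm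
    _ = (∑ j ∈ Finset.range p, u ^ j) ^ m := by
        rw [Finset.prod_const, Finset.card_univ, Fintype.card_fin]

lemma chernoff {p m d : ℕ} {u : ℝ} (hu : 0 < u) (hu1 : u ≤ 1) :
    (md p m d : ℝ) * u ^ d ≤ (∑ j ∈ Finset.range p, u ^ j) ^ m := by
  rw [← sum_pow_expand p u]
  calc (md p m d : ℝ) * u ^ d = ∑ _e ∈ Ed p m d, u ^ d := by
        rw [Finset.sum_const, md, nsmul_eq_mul]
    _ ≤ ∑ e ∈ Ed p m d, u ^ (∑ i, e i) := by
        refine Finset.sum_le_sum fun e he => ?_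
        exact pow_le_pow_of_le_one hu.le hu1 (Finset.mem_filter.1 he).2
    _ ≤ _ := by
        refine Finset.sum_le_sum_of_subset_of_nonneg (Finset.filter_subset _ _)
          fun e _ _ => by positivity

lemma mem_Ed {p m d : ℕ} {e : Fin m → ℕ} :
    e ∈ Ed p m d ↔ (∀ i, e i < p) ∧ ∑ i, e i ≤ d := by
  simp [Ed, Fintype.mem_piFinset]

lemma md_full (p m : ℕ) : md p m ((p-1)*m) = p ^ m := by
  classical
  have : Ed p m ((p-1)*m) = Fintype.piFinset fun _ : Fin m => Finset.range p := by
    apply Finset.filter_true_of_mem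
    intro e he
    have hbd : ∀ i, e i ≤ p - 1 := fun i => by
      have := Fintype.mem_piFinset.1 he i; rw [Finset.mem_range] at this; omega
    calc ∑ i, e i ≤ ∑ _i : Fin m, (p-1) := Finset.sum_le_sum fun i _ => hbd i
      _ = (p-1)*m := by simp [mul_comm]
  rw [md, this]
  simp

lemma compl_count (p m d : ℕ) :
    p ^ m ≤ md p m d + md p m ((p - 1) * m - d - 1) := by
  classical
  have hsub : Ed p m d ⊆ Ed p m ((p-1)*m) := by
    intro e he
    rw [mem_Ed] at he ⊢
    refine ⟨he.1, ?_⟩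
    calc ∑ i, e i ≤ ∑ _i : Fin m, (p-1) := Finset.sum_le_sum fun i _ => by
          have := he.1 i; omega
      _ = (p-1)*m := by simp [mul_comm]
  have hcard := Finset.card_sdiff_add_card_eq_card hsub
  have hneg : (Ed p m ((p-1)*m) \ Ed p m d).card ≤ md p m ((p - 1) * m - d - 1) := by
    apply Finset.card_le_card_of_injOn (fun e i => (p - 1) - e i)
    · intro e he
      rw [Finset.mem_coe, Finset.mem_sdiff, mem_Ed, mem_Ed] at he
      obtain ⟨⟨hep, _⟩, hed⟩ := he
      have hed' : ¬ (∑ i, e i ≤ d) := fun hc => hed ⟨hep, hc⟩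
      have hbd : ∀ i, e i ≤ p - 1 := fun i => by have := hep i; omega
      have hsum : (∑ i, ((p - 1) - e i)) + (∑ i, e i) = (p-1) * m := by
        rw [← Finset.sum_add_distrib]
        have he2 : ∀ i ∈ Finset.univ, ((p-1) - e i) + e i = (p-1) := fun i _ => by
          have := hbd i; omega
        rw [Finset.sum_congr rfl he2]
        simp [mul_comm]
      rw [Finset.mem_coe, mem_Ed]
      beta_reduce
      constructor
      · intro i
        have h1 := hbd i
        have hp1 : 1 ≤ p := by
          by_contra hc
          have : p = 0 := by omega
          subst this
          exact absurd (hep ⟨0, by omega⟩) (by omega)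
        omega
      · omega
    · intro e he e' he' heq
      rw [Finset.mem_coe, Finset.mem_sdiff, mem_Ed] at he he'
      funext i
      have h1 : e i ≤ p - 1 := by have := he.1.1 i; omega
      have h2 : e' i ≤ p - 1 := by have := he'.1.1 i; omega
      have := congrFun heq i
      simp only at this
      omega
  calc p ^ m = (Ed p m ((p-1)*m) \ Ed p m d).card + md p m d := by
        rw [md, ← md_full p m, md, hcard]
    _ ≤ md p m ((p-1)*m - d - 1) + md p m d := by omega
    _ = _ := by omega

lemma mono_li {p : ℕ} [Fact p.Prime] {m d : ℕ} :
    LinearIndependent (ZMod p) (fun e : ↥(Ed p m d) => monoF p e.1) := by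
  classical
  rw [Fintype.linearIndependent_iff]
  intro g hg e₀
  set Q : MvPolynomial (Fin m) (ZMod p) :=
    ∑ e : ↥(Ed p m d), MvPolynomial.monomial (Finsupp.equivFunOnFinite.symm e.1) (g e) with hQ
  have heval : ∀ v : Fin m → ZMod p, MvPolynomial.eval v Q = 0 := by
    intro v
    have := congrFun hg v
    rw [hQ, map_sum]
    simpa [MvPolynomial.eval_monomial, Finsupp.prod_fintype, monoF,
      Finsupp.equivFunOnFinite, smul_eq_mul] using this
  have hmem : Q ∈ MvPolynomial.restrictDegree (Fin m) (ZMod p) (Fintype.card (ZMod p) - 1) := by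
    rw [MvPolynomial.mem_restrictDegree]
    intro s hs i
    have : MvPolynomial.coeff s Q ≠ 0 := MvPolynomial.mem_support_iff.1 hs
    rw [hQ, MvPolynomial.coeff_sum] at this
    obtain ⟨e, _, he⟩ := Finset.exists_ne_zero_of_sum_ne_zero this
    rw [MvPolynomial.coeff_monomial] at he
    have hse : Finsupp.equivFunOnFinite.symm e.1 = s := by
      by_contra hc; rw [if_neg hc] at he; exact he rfl
    have : s i = e.1 i := by rw [← hse]; rfl
    rw [this, ZMod.card]
    have := (mem_Ed.1 e.2).1 i
    omega
  have hQ0 : Q = 0 := MvPolynomial.eq_zero_of_eval_eq_zero _ _ Q heval hmem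
  have : MvPolynomial.coeff (Finsupp.equivFunOnFinite.symm e₀.1) Q = g e₀ := by
    rw [hQ, MvPolynomial.coeff_sum]
    rw [Finset.sum_eq_single e₀]
    · rw [MvPolynomial.coeff_monomial, if_pos rfl]
    · intro e _ hne
      rw [MvPolynomial.coeff_monomial, if_neg]
      intro hc
      exact hne (Subtype.ext (Finsupp.equivFunOnFinite.symm.injective hc))
    · intro h; exact absurd (Finset.mem_univ _) h
  rw [hQ0] at this
  simpa using this.symm

lemma exists_big_support {p : ℕ} [Fact p.Prime] {V : Type*} [Fintype V] [DecidableEq V]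
    (Z : Submodule (ZMod p) (V → ZMod p)) :
    ∃ f ∈ Z, Module.finrank (ZMod p) Z ≤ (Finset.univ.filter fun v => f v ≠ 0).card := by
  classical
  haveI : Fintype ↥Z := Fintype.ofFinite _
  obtain ⟨f, -, hmax⟩ := Finset.exists_max_image (Finset.univ : Finset ↥Z)
    (fun f => (Finset.univ.filter fun v => (f : V → ZMod p) v ≠ 0).card) ⟨0, Finset.mem_univ 0⟩
  set T := Finset.univ.filter fun v => (f : V → ZMod p) v ≠ 0 with hT
  refine ⟨f.1, f.2, ?_⟩
  have hinj : Function.Injective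
      ((LinearMap.funLeft (ZMod p) (ZMod p) (fun t : ↥T => (t.1 : V))).comp Z.subtype) := by
    rw [← LinearMap.ker_eq_bot, LinearMap.ker_eq_bot']
    intro g hg0
    by_contra hg
    have hgfun : ∃ v, g.1 v ≠ 0 := by
      by_contra hc
      push_neg at hc
      exact hg (Subtype.ext (funext hc))
    obtain ⟨v, hv⟩ := hgfun
    have hvT : v ∉ T := by
      intro hvT
      have h2 := congrFun hg0 ⟨v, hvT⟩
      simp only [LinearMap.comp_apply, LinearMap.funLeft_apply, Submodule.coe_subtype,
        Pi.zero_apply] at h2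
      exact hv h2
    have hfv : f.1 v = 0 := by
      by_contra hc
      exact hvT (Finset.mem_filter.2 ⟨Finset.mem_univ _, hc⟩)
    have hsub : insert v T ⊆ Finset.univ.filter fun w => (f.1 + g.1) w ≠ 0 := by
      intro w hw
      rcases Finset.mem_insert.1 hw with h | h
      · subst h
        refine Finset.mem_filter.2 ⟨Finset.mem_univ _, ?_⟩
        simp [hfv, hv]
      · refine Finset.mem_filter.2 ⟨Finset.mem_univ _, ?_⟩
        have hgw : g.1 w = 0 := by
          have h2 := congrFun hg0 ⟨w, h⟩
          simpa using h2
        have hfw : f.1 w ≠ 0 := (Finset.mem_filter.1 h).2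
        simp [hgw, hfw]
    have hcard : T.card + 1 ≤ (Finset.univ.filter fun w => (f.1 + g.1) w ≠ 0).card := by
      have := Finset.card_le_card hsub
      rwa [Finset.card_insert_of_notMem hvT] at this
    have := hmax (f + g) (Finset.mem_univ _)
    have hfg : ((f + g : ↥Z) : V → ZMod p) = f.1 + g.1 := rfl
    rw [hfg] at this
    omega
  calc Module.finrank (ZMod p) Z ≤ Module.finrank (ZMod p) (↥T → ZMod p) :=
        LinearMap.finrank_le_finrank_of_injective hinj
    _ = T.card := by rw [Module.finrank_fintype_fun_eq_card, Fintype.card_coe]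

lemma rank_bound {p : ℕ} [Fact p.Prime] {m d : ℕ} (A : Finset (Fin m → ZMod p))
    (H : ∀ x ∈ A, ∀ y ∈ A, x ≠ y → x + y ∉ A.image (fun a => a + a))
    (P : (Fin m → ZMod p) → ZMod p)
    (hPW : P ∈ Submodule.span (ZMod p) (Set.range fun e : ↥(Ed p m d) => monoF p e.1))
    (hPvan : ∀ v, v ∉ A.image (fun a => a + a) → P v = 0) :
    (A.filter fun a => P (a + a) ≠ 0).card ≤ 2 * md p m (d / 2) := by
  classical
  set T' : Finset (Fin m → ZMod p) := A.filter (fun a => P (a + a) ≠ 0) with hT'def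
  rw [Submodule.mem_span_range_iff_exists_fun] at hPW
  obtain ⟨lam, hlam⟩ := hPW
  set big : Finset (Fin m → ℕ) := Fintype.piFinset (fun _ : Fin m => Finset.range p) with hbigdef
  set ρ : (Fin m → ℕ) → (Fin m → ZMod p) → ZMod p := fun f =>
    ∑ e : ↥(Ed p m d), (if (∀ i, f i ≤ e.1 i)
      then (lam e * (∏ i, ((e.1 i).choose (f i) : ZMod p))) • monoF p (fun i => e.1 i - f i)
      else 0) with hρdef
  have hρ_apply : ∀ f y, ρ f y = ∑ e : ↥(Ed p m d), (if (∀ i, f i ≤ e.1 i)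
      then lam e * (∏ i, ((e.1 i).choose (f i) : ZMod p)) * monoF p (fun i => e.1 i - f i) y
      else 0) := by
    intro f y
    simp only [hρdef]
    rw [Finset.sum_apply]
    refine Finset.sum_congr rfl fun e _ => ?_
    by_cases hc : ∀ i, f i ≤ e.1 i
    · rw [if_pos hc, if_pos hc, Pi.smul_apply, smul_eq_mul]
    · rw [if_neg hc, if_neg hc, Pi.zero_apply]
  -- expansion of P (a + y)
  have expand : ∀ a y : Fin m → ZMod p,
      P (a + y) = ∑ f ∈ big, monoF p f a * ρ f y := by
    intro a y
    have hmono : ∀ e : ↥(Ed p m d), monoF p e.1 (a + y)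
        = ∑ f ∈ big, (if (∀ i, f i ≤ e.1 i)
            then (monoF p f a) * monoF p (fun i => e.1 i - f i) y
              * (∏ i, ((e.1 i).choose (f i) : ZMod p))
            else 0) := by
      intro e
      have h0 : monoF p e.1 (a + y) = ∏ i, (a i + y i) ^ e.1 i := rfl
      have h1 : ∀ i : Fin m, (a i + y i) ^ e.1 i
          = ∑ j ∈ Finset.range (e.1 i + 1),
              a i ^ j * y i ^ (e.1 i - j) * (((e.1 i).choose j : ℕ) : ZMod p) := by
        intro i; exact add_pow (a i) (y i) (e.1 i)
      rw [h0, Finset.prod_congr rfl (fun i _ => h1 i), Finset.prod_univ_sum]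
      have hsubset : Fintype.piFinset (fun i => Finset.range (e.1 i + 1))
          = big.filter (fun f => ∀ i, f i ≤ e.1 i) := by
        ext f
        rw [Finset.mem_filter, Fintype.mem_piFinset, hbigdef, Fintype.mem_piFinset]
        simp only [Finset.mem_range, Nat.lt_succ_iff]
        constructor
        · intro hf
          exact ⟨fun i => by have h2 := (mem_Ed.1 e.2).1 i; have := hf i; omega, hf⟩
        · exact fun hf => hf.2
      rw [hsubset, Finset.sum_filter]
      refine Finset.sum_congr rfl fun f _ => ?_
      by_cases hc : ∀ i, f i ≤ e.1 i
      · rw [if_pos hc, if_pos hc]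
        rw [Finset.prod_mul_distrib, Finset.prod_mul_distrib]
        rfl
      · rw [if_neg hc, if_neg hc]
    have hP : P (a + y) = ∑ e : ↥(Ed p m d), lam e * monoF p e.1 (a + y) := by
      rw [← hlam, Finset.sum_apply]
      refine Finset.sum_congr rfl fun e _ => ?_
      rw [Pi.smul_apply, smul_eq_mul]
    rw [hP]
    calc ∑ e : ↥(Ed p m d), lam e * monoF p e.1 (a + y)
        = ∑ e : ↥(Ed p m d), ∑ f ∈ big, (if (∀ i, f i ≤ e.1 i)
            then lam e * ((monoF p f a) * monoF p (fun i => e.1 i - f i) y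
              * (∏ i, ((e.1 i).choose (f i) : ZMod p)))
            else 0) := by
          refine Finset.sum_congr rfl fun e _ => ?_
          rw [hmono e, Finset.mul_sum]
          refine Finset.sum_congr rfl fun f _ => ?_
          rw [mul_ite, mul_zero]
      _ = ∑ f ∈ big, ∑ e : ↥(Ed p m d), (if (∀ i, f i ≤ e.1 i)
            then lam e * ((monoF p f a) * monoF p (fun i => e.1 i - f i) y
              * (∏ i, ((e.1 i).choose (f i) : ZMod p)))
            else 0) := Finset.sum_comm
      _ = ∑ f ∈ big, monoF p f a * ρ f y := by
          refine Finset.sum_congr rfl fun f _ => ?_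
          rw [hρ_apply, Finset.mul_sum]
          refine Finset.sum_congr rfl fun e _ => ?_
          by_cases hc : ∀ i, f i ≤ e.1 i
          · rw [if_pos hc, if_pos hc]; ring
          · rw [if_neg hc, if_neg hc, mul_zero]
  -- high-degree f: ρ f lies in the span of low monomials
  have rho_high : ∀ f : Fin m → ℕ, f ∈ big → d/2 < ∑ i, f i →
      ρ f ∈ Submodule.span (ZMod p)
        (Set.range fun g : ↥(Ed p m (d/2)) => monoF p g.1) := by
    intro f _ hfdeg
    rw [hρdef]
    apply Submodule.sum_mem
    intro e _
    by_cases hc : ∀ i, f i ≤ e.1 i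
    · rw [if_pos hc]
      apply Submodule.smul_mem
      apply Submodule.subset_span
      have hmem : (fun i => e.1 i - f i) ∈ Ed p m (d/2) := by
        rw [mem_Ed]
        have he := mem_Ed.1 e.2
        constructor
        · intro i; have := he.1 i; omega
        · have hsum : (∑ i, (e.1 i - f i)) + ∑ i, f i = ∑ i, e.1 i := by
            rw [← Finset.sum_add_distrib]
            exact Finset.sum_congr rfl fun i _ => by have := hc i; omega
          have := he.2
          omega
      exact ⟨⟨_, hmem⟩, rfl⟩
    · rw [if_neg hc]; exact Submodule.zero_mem _
  -- the restriction map and the family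
  set r : ((Fin m → ZMod p) → ZMod p) →ₗ[ZMod p] (↥T' → ZMod p) :=
    LinearMap.funLeft (ZMod p) (ZMod p) (fun b : ↥T' => (b.1 : Fin m → ZMod p)) with hrdef
  set F : ↥T' → (↥T' → ZMod p) := fun a => r (fun y => P (a.1 + y)) with hFdef
  set G : Finset (↥T' → ZMod p) :=
    (Ed p m (d/2)).image (fun f => r (ρ f)) ∪ (Ed p m (d/2)).image (fun g => r (monoF p g))
    with hGdef
  set U : Submodule (ZMod p) (↥T' → ZMod p) := Submodule.span (ZMod p) (G : Set _) with hUdef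
  have hFmem : ∀ a : ↥T', F a ∈ U := by
    intro a
    have hPa : (fun y => P (a.1 + y)) = ∑ f ∈ big, monoF p f a.1 • ρ f := by
      funext y
      rw [expand a.1 y, Finset.sum_apply]
      exact Finset.sum_congr rfl fun f _ => by rw [Pi.smul_apply, smul_eq_mul]
    have hFa : F a = ∑ f ∈ big, monoF p f a.1 • r (ρ f) := by
      rw [hFdef]
      simp only
      rw [hPa, map_sum]
      exact Finset.sum_congr rfl fun f _ => by rw [map_smul]
    rw [hFa, ← Finset.sum_filter_add_sum_filter_not big (fun f => ∑ i, f i ≤ d/2)]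
    apply Submodule.add_mem
    · apply Submodule.sum_mem
      intro f hf
      rw [Finset.mem_filter] at hf
      apply Submodule.smul_mem
      apply Submodule.subset_span
      rw [Finset.mem_coe, hGdef]
      apply Finset.mem_union_left
      apply Finset.mem_image_of_mem
      rw [mem_Ed]
      exact ⟨fun i => by
        have := Fintype.mem_piFinset.1 hf.1 i; rwa [Finset.mem_range] at this, hf.2⟩
    · apply Submodule.sum_mem
      intro f hf
      rw [Finset.mem_filter] at hf
      apply Submodule.smul_mem
      have h1 := rho_high f hf.1 (by omega)
      have h2 : r (ρ f) ∈ Submodule.map r (Submodule.span (ZMod p)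
          (Set.range fun g : ↥(Ed p m (d/2)) => monoF p g.1)) :=
        Submodule.mem_map_of_mem h1
      rw [Submodule.map_span] at h2
      refine Submodule.span_le.2 ?_ h2
      rintro x ⟨y, ⟨g, rfl⟩, rfl⟩
      apply Submodule.subset_span
      rw [Finset.mem_coe, hGdef]
      apply Finset.mem_union_right
      exact Finset.mem_image.2 ⟨g.1, g.2, rfl⟩
  have hFli : LinearIndependent (ZMod p) F := by
    rw [Fintype.linearIndependent_iff]
    intro g hg b
    have hb : (∑ i : ↥T', g i • F i) b = 0 := by
      have := congrFun hg b
      simpa using this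
    have hb2 : ∑ a : ↥T', g a * P (a.1 + b.1) = 0 := by
      rw [← hb, Finset.sum_apply]
      exact Finset.sum_congr rfl fun a _ => by
        rw [Pi.smul_apply, smul_eq_mul, hFdef]
        rfl
    rw [Finset.sum_eq_single b] at hb2
    · have hPb : P (b.1 + b.1) ≠ 0 := (Finset.mem_filter.1 b.2).2
      exact (mul_eq_zero.1 hb2).resolve_right hPb
    · intro a _ hab
      have haA : a.1 ∈ A := (Finset.mem_filter.1 a.2).1
      have hbA : b.1 ∈ A := (Finset.mem_filter.1 b.2).1
      have hne : a.1 ≠ b.1 := fun hc => hab (Subtype.ext hc)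
      have := hPvan _ (H a.1 haA b.1 hbA hne)
      rw [this, mul_zero]
    · intro hb'; exact absurd (Finset.mem_univ b) hb'
  -- conclude
  have hcard1 : T'.card = Fintype.card ↥T' := (Fintype.card_coe T').symm
  have hF' : LinearIndependent (ZMod p) (fun a : ↥T' => (⟨F a, hFmem a⟩ : ↥U)) := by
    apply LinearIndependent.of_comp U.subtype
    exact hFli
  have hcard2 : Fintype.card ↥T' ≤ Module.finrank (ZMod p) ↥U :=
    hF'.fintype_card_le_finrank
  have hcard3 : Module.finrank (ZMod p) ↥U ≤ G.card := by
    rw [hUdef]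
    exact finrank_span_finset_le_card G
  have hcard4 : G.card ≤ 2 * md p m (d/2) := by
    calc G.card ≤ ((Ed p m (d/2)).image (fun f => r (ρ f))).card
        + ((Ed p m (d/2)).image (fun g => r (monoF p g))).card := Finset.card_union_le _ _
      _ ≤ md p m (d/2) + md p m (d/2) :=
          Nat.add_le_add (Finset.card_image_le) (Finset.card_image_le)
      _ = 2 * md p m (d/2) := by ring
  omega
theorem core {p : ℕ} [Fact p.Prime] (hp3 : 3 ≤ p) {m : ℕ} (A : Finset (Fin m → ZMod p))
    (H : ∀ x ∈ A, ∀ y ∈ A, ∀ z ∈ A, x + z = y + y → x = y) (d : ℕ) :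
    A.card + md p m d ≤ 2 * md p m (d / 2) + p ^ m := by
  have two_ne : (2 : ZMod p) ≠ 0 := by
    have h2 : ((2:ℕ) : ZMod p) ≠ 0 := by
      rw [Ne, ZMod.natCast_eq_zero_iff]
      intro hdvd
      have := Nat.le_of_dvd (by norm_num) hdvd
      omega
    simpa using h2
  have dbl_inj : Function.Injective (fun a : Fin m → ZMod p => a + a) := by
    intro a b hab
    funext i
    have h1 : a i + a i = b i + b i := congrFun hab i
    have h2 : (2 : ZMod p) * a i = 2 * b i := by rw [two_mul, two_mul]; exact h1
    exact mul_left_cancel₀ two_ne h2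
  set B : Finset (Fin m → ZMod p) := A.image (fun a => a + a) with hBdef
  have hBcard : B.card = A.card := Finset.card_image_of_injective _ dbl_inj
  have hAB : ∀ x ∈ A, ∀ y ∈ A, x ≠ y → x + y ∉ B := by
    intro x hx y hy hxy hmem
    obtain ⟨c, hc, hcx⟩ := Finset.mem_image.1 hmem
    have h1 : x = c := H x hx c hc y hy hcx.symm
    have h2 : y = c := H y hy c hc x hx (by rw [add_comm]; exact hcx.symm)
    exact hxy (h1.trans h2.symm)
  set W := Submodule.span (ZMod p) (Set.range fun e : ↥(Ed p m d) => monoF p e.1) with hWdef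
  have hWrank : Module.finrank (ZMod p) ↥W = md p m d := by
    have h := finrank_span_eq_card (R := ZMod p) (mono_li (p := p) (m := m) (d := d))
    rw [hWdef]
    exact h.trans (Fintype.card_coe _)
  set cmpl := Finset.univ \ B with hcmpl
  set φ : ((Fin m → ZMod p) → ZMod p) →ₗ[ZMod p] (↥cmpl → ZMod p) :=
    LinearMap.funLeft (ZMod p) (ZMod p) (fun v : ↥cmpl => (v.1 : Fin m → ZMod p)) with hφdef
  set ψ := φ.domRestrict W with hψdef
  have hrn := LinearMap.finrank_range_add_finrank_ker ψ
  have hrange : Module.finrank (ZMod p) ↥(LinearMap.range ψ) ≤ cmpl.card := by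
    calc Module.finrank (ZMod p) ↥(LinearMap.range ψ)
        ≤ Module.finrank (ZMod p) (↥cmpl → ZMod p) := Submodule.finrank_le _
      _ = cmpl.card := by rw [Module.finrank_fintype_fun_eq_card, Fintype.card_coe]
  set Z := W ⊓ LinearMap.ker φ with hZdef
  have hkerψ : Module.finrank (ZMod p) ↥(LinearMap.ker ψ) = Module.finrank (ZMod p) ↥Z := by
    rw [hψdef, LinearMap.ker_domRestrict]
    rw [hZdef, ← Submodule.map_comap_subtype]
    exact (Submodule.equivMapOfInjective W.subtype (Submodule.injective_subtype W)
      _).finrank_eq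
  obtain ⟨P, hPZ, hPbig⟩ := exists_big_support Z
  have hPW : P ∈ W := (Submodule.mem_inf.1 hPZ).1
  have hPker : P ∈ LinearMap.ker φ := (Submodule.mem_inf.1 hPZ).2
  have hPvan : ∀ v, v ∉ B → P v = 0 := by
    intro v hv
    have h0 : φ P = 0 := hPker
    have := congrFun h0 ⟨v, Finset.mem_sdiff.2 ⟨Finset.mem_univ _, hv⟩⟩
    simpa [φ] using this
  have hsupp : (Finset.univ.filter fun v => P v ≠ 0)
      = (A.filter fun a => P (a + a) ≠ 0).image (fun a => a + a) := by
    ext v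
    constructor
    · intro hv
      have hPv : P v ≠ 0 := (Finset.mem_filter.1 hv).2
      have hvB : v ∈ B := by
        by_contra hc
        exact hPv (hPvan v hc)
      obtain ⟨a, haA, hav⟩ := Finset.mem_image.1 hvB
      exact Finset.mem_image.2 ⟨a, Finset.mem_filter.2 ⟨haA, by rw [hav]; exact hPv⟩, hav⟩
    · intro hv
      obtain ⟨a, ha, hav⟩ := Finset.mem_image.1 hv
      have h3 := (Finset.mem_filter.1 ha).2
      refine Finset.mem_filter.2 ⟨Finset.mem_univ _, by rw [← hav]; exact h3⟩
  have hTcard : (Finset.univ.filter fun v => P v ≠ 0).card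
      = (A.filter fun a => P (a + a) ≠ 0).card := by
    rw [hsupp, Finset.card_image_of_injective _ dbl_inj]
  have hrank := rank_bound A hAB P (hWdef ▸ hPW) hPvan
  have hunivcard : (Finset.univ : Finset (Fin m → ZMod p)).card = p ^ m := by
    simp [ZMod.card]
  have hcmplcard : cmpl.card + B.card = p ^ m := by
    rw [hcmpl, Finset.card_sdiff_add_card_eq_card (Finset.subset_univ B), hunivcard]
  omega

lemma keyM {p : ℕ} [Fact p.Prime] (hp3 : 3 ≤ p) {m : ℕ} (A : Finset (Fin m → ZMod p))
    (H : ∀ x ∈ A, ∀ y ∈ A, ∀ z ∈ A, x + z = y + y → x = y)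
    {u : ℝ} (hu : 0 < u) (hu1 : u ≤ 1) :
    (A.card : ℝ) * u ^ ((((p-1)*m : ℕ) : ℝ)/3) ≤ 3 * (∑ j ∈ Finset.range p, u ^ j) ^ m := by
  set N := (p-1)*m with hN
  set d := (2*N+1)/3 with hd
  have hd1 : 3 * (d/2) ≤ N := by omega
  have hd2 : 3 * (N - d - 1) ≤ N := by omega
  have hcomb : A.card ≤ 2 * md p m (d/2) + md p m (N - d - 1) := by
    have h1 := core hp3 A H d
    have h2 := compl_count p m d
    rw [← hN] at h2
    omega
  have key : ∀ D : ℕ, 3 * D ≤ N →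
      (md p m D : ℝ) * u ^ (((N : ℕ) : ℝ)/3) ≤ (∑ j ∈ Finset.range p, u^j)^m := by
    intro D hD
    have hch := chernoff (p := p) (m := m) (d := D) hu hu1
    have hDN : ((D : ℕ) : ℝ) ≤ ((N:ℕ) : ℝ)/3 := by
      rw [le_div_iff₀ (by norm_num : (0:ℝ) < 3)]
      have : ((3 * D : ℕ) : ℝ) ≤ ((N : ℕ) : ℝ) := Nat.cast_le.2 hD
      push_cast at this ⊢
      linarith
    have hrp : u ^ (((N:ℕ):ℝ)/3) ≤ u ^ ((D : ℕ) : ℝ) :=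
      Real.rpow_le_rpow_of_exponent_ge hu hu1 hDN
    calc (md p m D : ℝ) * u ^ (((N:ℕ):ℝ)/3) ≤ (md p m D : ℝ) * u ^ ((D:ℕ):ℝ) :=
          mul_le_mul_of_nonneg_left hrp (by positivity)
      _ = (md p m D : ℝ) * u ^ D := by rw [Real.rpow_natCast]
      _ ≤ _ := hch
  have hexp : (0:ℝ) ≤ u ^ (((N:ℕ):ℝ)/3) := (Real.rpow_pos_of_pos hu _).le
  calc (A.card:ℝ) * u ^ (((N:ℕ):ℝ)/3)
      ≤ ((2 * md p m (d/2) + md p m (N-d-1) : ℕ) : ℝ) * u ^ (((N:ℕ):ℝ)/3) :=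
        mul_le_mul_of_nonneg_right (Nat.cast_le.2 hcomb) hexp
    _ = 2 * ((md p m (d/2) : ℝ) * u ^ (((N:ℕ):ℝ)/3))
        + (md p m (N-d-1) : ℝ) * u ^ (((N:ℕ):ℝ)/3) := by push_cast; ring
    _ ≤ 2 * ((∑ j ∈ Finset.range p, u^j)^m) + (∑ j ∈ Finset.range p, u^j)^m := by
        have k1 := key _ hd1
        have k2 := key _ hd2
        have h2 : (0:ℝ) ≤ 2 := by norm_num
        nlinarith [k1, k2]
    _ = 3 * (∑ j ∈ Finset.range p, u ^ j) ^ m := by ring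

lemma prog_free_pow {p n : ℕ} (A : Finset (Fin n → ZMod p))
    (H : ∀ x ∈ A, ∀ y ∈ A, ∀ z ∈ A, x + z = y + y → x = y) (k : ℕ) :
    ∃ A' : Finset (Fin (k*n) → ZMod p), A'.card = A.card ^ k ∧
      (∀ x ∈ A', ∀ y ∈ A', ∀ z ∈ A', x + z = y + y → x = y) := by
  classical
  set pack : (Fin k → Fin n → ZMod p) → (Fin (k*n) → ZMod p) :=
    fun F j => F (finProdFinEquiv.symm j).1 ((finProdFinEquiv.symm j).2) with hpack
  have hpinj : Function.Injective pack := by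
    intro F G hFG
    funext j i
    have hsymm : finProdFinEquiv.symm (finProdFinEquiv (j, i)) = (j, i) :=
      Equiv.symm_apply_apply _ _
    have h0 := congrFun hFG (finProdFinEquiv (j, i))
    simp only [hpack, hsymm] at h0
    exact h0
  refine ⟨(Fintype.piFinset fun _ : Fin k => A).image pack, ?_, ?_⟩
  · rw [Finset.card_image_of_injective _ hpinj]
    simp
  · intro x hx y hy z hz hxz
    obtain ⟨Fx, hFx, rfl⟩ := Finset.mem_image.1 hx
    obtain ⟨Fy, hFy, rfl⟩ := Finset.mem_image.1 hy
    obtain ⟨Fz, hFz, rfl⟩ := Finset.mem_image.1 hz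
    have hslice : ∀ j, Fx j = Fy j := by
      intro j
      have hadd : Fx j + Fz j = Fy j + Fy j := by
        funext i
        have hsymm : finProdFinEquiv.symm (finProdFinEquiv (j, i)) = (j, i) :=
          Equiv.symm_apply_apply _ _
        have h0 := congrFun hxz (finProdFinEquiv (j, i))
        simp only [hpack, hsymm, Pi.add_apply] at h0
        exact h0
      exact H _ (Fintype.mem_piFinset.1 hFx j) _ (Fintype.mem_piFinset.1 hFy j)
        _ (Fintype.mem_piFinset.1 hFz j) hadd
    exact congrArg pack (funext hslice)

lemma pow_limit {C X : ℝ} (hC : 0 ≤ C) (hX : 0 < X)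
    (h : ∀ k : ℕ, 1 ≤ k → C^k ≤ 3*X^k) : C ≤ X := by
  by_contra hlt
  push_neg at hlt
  have h1 : 1 < C / X := (one_lt_div hX).2 hlt
  obtain ⟨k, hk⟩ := pow_unbounded_of_one_lt (3:ℝ) h1
  have hk1 : 1 ≤ k := by
    rcases Nat.eq_zero_or_pos k with h0 | h0
    · exfalso; subst h0; rw [pow_zero] at hk; linarith
    · omega
  have h2 := h k hk1
  rw [div_pow] at hk
  rw [lt_div_iff₀ (by positivity)] at hk
  linarith

lemma keyFinal {p : ℕ} [Fact p.Prime] (hp3 : 3 ≤ p) {n : ℕ} (A : Finset (Fin n → ZMod p))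
    (H : ∀ x ∈ A, ∀ y ∈ A, ∀ z ∈ A, x + z = y + y → x = y)
    {u : ℝ} (hu : 0 < u) (hu1 : u ≤ 1) :
    (A.card : ℝ) * u ^ ((((p-1)*n : ℕ) : ℝ)/3) ≤ (∑ j ∈ Finset.range p, u ^ j) ^ n := by
  have hS : (0:ℝ) < ∑ j ∈ Finset.range p, u ^ j := by
    apply Finset.sum_pos (fun j _ => by positivity)
    exact ⟨0, Finset.mem_range.2 (by omega)⟩
  apply pow_limit (by positivity) (by positivity)
  intro k hk
  obtain ⟨A', hcard, H'⟩ := prog_free_pow A H k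
  have hkm := keyM hp3 A' H' hu hu1
  rw [hcard] at hkm
  have hexp : ((((p-1)*(k*n) : ℕ) : ℝ)/3) = ((((p-1)*n : ℕ) : ℝ)/3) * k := by
    push_cast; ring
  have hupow : u ^ ((((p-1)*(k*n) : ℕ) : ℝ)/3) = (u ^ ((((p-1)*n : ℕ) : ℝ)/3)) ^ k := by
    rw [hexp, Real.rpow_mul hu.le, Real.rpow_natCast]
  have hSpow : (∑ j ∈ Finset.range p, u ^ j) ^ (k*n)
      = ((∑ j ∈ Finset.range p, u ^ j) ^ n) ^ k := by
    rw [mul_comm k n, pow_mul]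
  calc ((A.card : ℝ) * u ^ ((((p-1)*n : ℕ) : ℝ)/3)) ^ k
      = (A.card : ℝ)^k * (u ^ ((((p-1)*n : ℕ) : ℝ)/3))^k := mul_pow _ _ _
    _ = (A.card : ℝ)^k * u ^ ((((p-1)*(k*n) : ℕ) : ℝ)/3) := by rw [hupow]
    _ = ((A.card ^ k : ℕ) : ℝ) * u ^ ((((p-1)*(k*n) : ℕ) : ℝ)/3) := by push_cast; ring
    _ ≤ 3 * (∑ j ∈ Finset.range p, u ^ j) ^ (k*n) := hkm
    _ = 3 * ((∑ j ∈ Finset.range p, u ^ j) ^ n) ^ k := by rw [hSpow]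

end EGaux

lemma Gfun_nonneg {m : ℕ} {α : ℝ} {h : ℕ} {u : ℝ} (hu : 0 < u) : 0 ≤ Gfun m α h u :=
  mul_nonneg (Real.rpow_nonneg hu.le _)
    (Finset.sum_nonneg fun j _ => pow_nonneg hu.le j)

lemma lam_lt {p : ℕ} (hp3 : 3 ≤ p) : Lam 1 (1/3) (p-1) < p := by
  set h : ℕ := p - 1 with hh
  have hp : 1 * h + 1 = p := by omega
  have hF1 : Gfun 1 (1/3) h 1 = p := by
    unfold Gfun
    rw [Real.one_rpow, one_mul]
    simp only [one_pow, Finset.sum_const, Finset.card_range, nsmul_eq_mul, mul_one]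
    exact_mod_cast congrArg Nat.cast hp
  -- derivative at u = 1
  have hg1 : HasDerivAt (fun u : ℝ => u ^ (-((1:ℝ)/3 * (h:ℝ)))) (-((1:ℝ)/3 * (h:ℝ))) 1 := by
    have := Real.hasDerivAt_rpow_const (x := (1:ℝ)) (p := -((1:ℝ)/3 * (h:ℝ)))
      (Or.inl one_ne_zero)
    simpa using this
  have hg2 : HasDerivAt (fun u : ℝ => ∑ j ∈ Finset.range (1*h+1), u ^ j)
      (∑ j ∈ Finset.range (1*h+1), (j:ℝ)) 1 := by
    have := HasDerivAt.fun_sum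
      (fun j (_ : j ∈ Finset.range (1*h+1)) => hasDerivAt_pow j (1:ℝ))
    simpa using this
  have hder : HasDerivAt (Gfun 1 (1/3) h)
      (-((1:ℝ)/3 * (h:ℝ)) * (∑ j ∈ Finset.range (1*h+1), (1:ℝ) ^ j)
        + 1 * (∑ j ∈ Finset.range (1*h+1), (j:ℝ))) 1 := by
    have hmul := hg1.mul hg2
    rw [Real.one_rpow] at hmul
    exact hmul
  set δ : ℝ := -((1:ℝ)/3 * (h:ℝ)) * (∑ j ∈ Finset.range (1*h+1), (1:ℝ) ^ j)
        + 1 * (∑ j ∈ Finset.range (1*h+1), (j:ℝ)) with hδ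
  have hδval : δ = -((1:ℝ)/3 * (h:ℝ)) * (h+1) + (h:ℝ)*(h+1)/2 := by
    have h1 : (∑ j ∈ Finset.range (1*h+1), (1:ℝ) ^ j) = ((h:ℝ)+1) := by
      simp
    have h2 : (∑ j ∈ Finset.range (1*h+1), (j:ℝ)) = (h:ℝ)*(h+1)/2 := by
      have := Finset.sum_range_id_mul_two (1*h+1)
      have hcast : ((∑ i ∈ Finset.range (1*h+1), i : ℕ) : ℝ) * 2
          = ((1*h+1 : ℕ) : ℝ) * (((1*h+1 : ℕ) - 1 : ℕ) : ℝ) := by exact_mod_cast congrArg Nat.cast this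
      push_cast at hcast
      push_cast
      linarith
    rw [hδ, h1, h2]
    ring
  have hδpos : 0 < δ := by
    have hh1 : (1:ℝ) ≤ (h:ℝ) := by
      have : 1 ≤ h := by omega
      exact_mod_cast this
    rw [hδval]
    nlinarith
  rw [hasDerivAt_iff_tendsto_slope] at hder
  have hmono : Filter.Tendsto (slope (Gfun 1 (1/3) h) 1) (nhdsWithin 1 (Set.Iio 1)) (nhds δ) :=
    hder.mono_left (nhdsWithin_mono 1 (fun x hx => ne_of_lt hx))
  have hev1 : ∀ᶠ u in nhdsWithin (1:ℝ) (Set.Iio 1), 0 < slope (Gfun 1 (1/3) h) 1 u :=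
    hmono.eventually (eventually_gt_nhds hδpos)
  have hev2 : ∀ᶠ u in nhdsWithin (1:ℝ) (Set.Iio 1), (0:ℝ) < u :=
    (eventually_gt_nhds (by norm_num : (0:ℝ) < 1)).filter_mono nhdsWithin_le_nhds
  have hev3 : ∀ᶠ u in nhdsWithin (1:ℝ) (Set.Iio 1), u < 1 :=
    eventually_mem_nhdsWithin.mono (fun x hx => hx)
  obtain ⟨u0, hslope, hu0pos, hu0lt⟩ := (hev1.and (hev2.and hev3)).exists
  obtain ⟨hu0pos, hu0lt⟩ := (⟨hu0pos, hu0lt⟩ : _ ∧ _)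
  have hFu0 : Gfun 1 (1/3) h u0 < Gfun 1 (1/3) h 1 := by
    have hs : slope (Gfun 1 (1/3) h) 1 u0
        = (Gfun 1 (1/3) h u0 - Gfun 1 (1/3) h 1) / (u0 - 1) := slope_def_field _ _ _
    rw [hs] at hslope
    by_contra hc
    push_neg at hc
    have hnum : 0 ≤ Gfun 1 (1/3) h u0 - Gfun 1 (1/3) h 1 := by linarith
    have hden : u0 - 1 < 0 := by linarith
    have : (Gfun 1 (1/3) h u0 - Gfun 1 (1/3) h 1) / (u0 - 1) ≤ 0 :=
      div_nonpos_of_nonneg_of_nonpos hnum hden.le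
    linarith
  have hbdd : BddBelow (Gfun 1 (1/3) h '' Set.Ioc 0 1) := by
    refine ⟨0, ?_⟩
    rintro x ⟨u, hu, rfl⟩
    exact Gfun_nonneg hu.1
  calc Lam 1 (1/3) h ≤ Gfun 1 (1/3) h u0 :=
        csInf_le hbdd ⟨u0, ⟨hu0pos, hu0lt.le⟩, rfl⟩
    _ < Gfun 1 (1/3) h 1 := hFu0
    _ = p := hF1

/-- Ellenberg–Gijswijt: a subset of `𝔽_p^n` with no non-degenerate three-term arithmetic
progression has size at most `Λ_{1,1/3,p-1}ⁿ`; moreover `Λ_{1,1/3,p-1} < p`. -/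
theorem ellenberg_gijswijt {p n : ℕ} (hp : p.Prime) (hp3 : 3 ≤ p)
    (A : Finset (Fin n → ZMod p))
    (hA : ¬∃ x : Fin 3 → (Fin n → ZMod p), (∀ i, x i ∈ A) ∧
      (∀ i j, i ≠ j → x i ≠ x j) ∧ x 0 - 2 • x 1 + x 2 = 0) :
    (A.card : ℝ) ≤ (Lam 1 (1 / 3) (p - 1)) ^ n ∧ Lam 1 (1 / 3) (p - 1) < p := by
  haveI := Fact.mk hp
  have two_ne : (2 : ZMod p) ≠ 0 := by
    have h2 : ((2:ℕ) : ZMod p) ≠ 0 := by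
      rw [Ne, ZMod.natCast_eq_zero_iff]
      intro hdvd
      have := Nat.le_of_dvd (by norm_num) hdvd
      omega
    simpa using h2
  have hdbl : ∀ a b : Fin n → ZMod p, a + a = b + b → a = b := by
    intro a b hab
    funext i
    have h1 : a i + a i = b i + b i := congrFun hab i
    have h2 : (2 : ZMod p) * a i = 2 * b i := by rw [two_mul, two_mul]; exact h1
    exact mul_left_cancel₀ two_ne h2
  have H : ∀ x ∈ A, ∀ y ∈ A, ∀ z ∈ A, x + z = y + y → x = y := by
    intro x hx y hy z hz hxz
    by_contra hxy
    have hxz' : x ≠ z := by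
      intro hE
      subst hE
      exact hxy (hdbl _ _ hxz)
    have hyz : y ≠ z := by
      intro hE
      subst hE
      exact hxy (add_right_cancel hxz)
    refine hA ⟨![x, y, z], ?_, ?_, ?_⟩
    · intro i
      fin_cases i <;> simpa
    · intro i j hij
      fin_cases i <;> fin_cases j <;>
        first
          | exact absurd rfl hij
          | simpa using hxy
          | simpa using hyz
          | simpa using hxz'
          | simpa using Ne.symm hxy
          | simpa using Ne.symm hyz
          | simpa using Ne.symm hxz'
    · show ![x,y,z] 0 - 2 • ![x,y,z] 1 + ![x,y,z] 2 = 0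
      have hv0 : ![x,y,z] 0 = x := rfl
      have hv1 : ![x,y,z] 1 = y := rfl
      have hv2 : ![x,y,z] 2 = z := rfl
      rw [hv0, hv1, hv2, two_smul, sub_add_eq_add_sub, sub_eq_zero]
      exact hxz
  have hGn : ∀ u : ℝ, 0 < u → u ≤ 1 → (A.card : ℝ) ≤ (Gfun 1 (1/3) (p-1) u)^n := by
    intro u hu hu1
    have hk := EGaux.keyFinal hp3 A H hu hu1
    have hrange : 1*(p-1)+1 = p := by omega
    have hGpow : (Gfun 1 (1/3) (p-1) u)^n
        = u ^ (-(((((p-1)*n : ℕ)) : ℝ)/3)) * (∑ j ∈ Finset.range p, u ^ j)^n := by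
      unfold Gfun
      rw [hrange, mul_pow, ← Real.rpow_natCast (u ^ (-(1/3 * ((p-1:ℕ):ℝ)))) n,
        ← Real.rpow_mul hu.le]
      congr 1
      push_cast
      ring
    rw [hGpow, Real.rpow_neg hu.le, inv_mul_eq_div, le_div_iff₀ (Real.rpow_pos_of_pos hu _)]
    exact hk
  constructor
  · rcases Nat.eq_zero_or_pos n with hn0 | hn
    · subst hn0
      simpa using hGn 1 one_pos le_rfl
    · set b : ℝ := (A.card : ℝ) ^ ((n:ℝ)⁻¹) with hb
      have hbnn : 0 ≤ b := Real.rpow_nonneg (Nat.cast_nonneg _) _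
      have hbn : b ^ n = A.card := by
        rw [hb, ← Real.rpow_natCast ((A.card:ℝ) ^ ((n:ℝ)⁻¹)) n,
          ← Real.rpow_mul (Nat.cast_nonneg _),
          inv_mul_cancel₀ (by exact_mod_cast hn.ne' : (n:ℝ) ≠ 0), Real.rpow_one]
      have hlb : ∀ x ∈ Gfun 1 (1/3) (p-1) '' Set.Ioc (0:ℝ) 1, b ≤ x := by
        rintro x ⟨u, hu, rfl⟩
        have hxnn : 0 ≤ Gfun 1 (1/3) (p-1) u := Gfun_nonneg hu.1
        have hpow : b ^ n ≤ (Gfun 1 (1/3) (p-1) u) ^ n := by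
          rw [hbn]; exact hGn u hu.1 hu.2
        exact le_of_pow_le_pow_left₀ hn.ne' hxnn hpow
      have hΛ : b ≤ Lam 1 (1/3) (p-1) :=
        le_csInf ⟨_, ⟨1, ⟨one_pos, le_refl 1⟩, rfl⟩⟩ hlb
      calc (A.card:ℝ) = b ^ n := hbn.symm
        _ ≤ (Lam 1 (1/3) (p-1)) ^ n := pow_le_pow_left₀ hbnn hΛ n
  · exact lam_lt hp3
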